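/- arXiv:2503.18474 — 2 statements merged into one kernel-verified Lean document; each statement's English description precedes it below -/
import Mathlib

section
/- Let G' be a finite directed graph with nonnegative edge weights containing a directed path P₂ of total length 0 and a sequence P₁ of distinct vertices disjoint from P₂ equipped with a linear order ≤_{P₁}, such that no vertex of P₁ has an outgoing edge in G' and every edge of G' whose head lies on P₂ is an edge of P₂. Assume the crossing hypothesis: whenever W is a walk in G' from a vertex b of P₂ to a vertex p of P₁ and W' is a walk in G' from a vertex b' of P₂ to a vertex p' of P₁ with b' <_{P₂} b and p' <_{P₁} p, the walks W and W' share a vertex. Let β > 0 and ε > 0, write v_f = dfirst_{G'}(v,P₁,β) when it exists, and let B be the set of maximal pairs (v, v_f), i.e., those with v_f defined and no u >_{P₂} v with u_f defined and u_f ≤_{P₁} v_f. Then B can be partitioned into t classes with t ≤ 1/ε + 1 such that for any two distinct pairs (b₁,p₁) and (b₂,p₂) in the same class with b₂ <_{P₂} b₁, some walk in G' from b₁ to p₂ has length at most (1+ε)β. -/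
/-- A walk in the directed graph with edge relation `E`: a nonempty list of vertices
starting at `u`, ending at `v`, with every consecutive pair an edge. -/
def IsWalk {V : Type*} (E : V → V → Prop) (l : List V) (u v : V) : Prop :=
  l ≠ [] ∧ l.head? = some u ∧ l.getLast? = some v ∧ l.Chain' E

/-- The length of a walk: the sum of the weights of its consecutive pairs. -/
def walkLen {V : Type*} (w : V → V → ℝ) (l : List V) : ℝ :=
  ((l.zip l.tail).map fun q => w q.1 q.2).sum

/-- `b` is `dfirst_G(v,Q,β)`: the `≤_Q`-least vertex of the ordered vertex list `q`
reachable from `v` by a walk of length at most `β`. -/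
def IsDFirst {V : Type*} [DecidableEq V] (E : V → V → Prop) (w : V → V → ℝ)
    (v : V) (q : List V) (β : ℝ) (b : V) : Prop :=
  b ∈ q ∧ (∃ l, IsWalk E l v b ∧ walkLen w l ≤ β) ∧
    ∀ c ∈ q, (∃ l, IsWalk E l v c ∧ walkLen w l ≤ β) → q.idxOf b ≤ q.idxOf c

/-- `(v, vf)` is a maximal pair: `vf = dfirst(v,P₁,β)` and there is no `u` strictly
later than `v` on `P₂` with `u_f` defined and `u_f ≤_{P₁} vf`. -/
def MaximalPair {V : Type*} [DecidableEq V] (E : V → V → Prop) (w : V → V → ℝ)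
    (p₂ p₁ : List V) (β : ℝ) (v vf : V) : Prop :=
  v ∈ p₂ ∧ IsDFirst E w v p₁ β vf ∧
    ¬ ∃ u uf, u ∈ p₂ ∧ p₂.idxOf v < p₂.idxOf u ∧
      IsDFirst E w u p₁ β uf ∧ p₁.idxOf uf ≤ p₁.idxOf vf

lemma walkLen_nonneg {V : Type*} (w : V → V → ℝ) (hw : ∀ x y, 0 ≤ w x y) (l : List V) :
    0 ≤ walkLen w l := by
  apply List.sum_nonneg
  intro a ha
  obtain ⟨q, _, rfl⟩ := List.mem_map.1 ha
  exact hw _ _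

lemma walkLen_cons₂ {V : Type*} (w : V → V → ℝ) (p q : V) (r : List V) :
    walkLen w (p :: q :: r) = w p q + walkLen w (q :: r) := by
  simp [walkLen]

lemma walkLen_split {V : Type*} (w : V → V → ℝ) (a : List V) (x : V) (b : List V) :
    walkLen w (a ++ x :: b) = walkLen w (a ++ [x]) + walkLen w (x :: b) := by
  induction a with
  | nil => simp [walkLen]
  | cons y t ih =>
    cases t with
    | nil => simp [walkLen_cons₂, walkLen]
    | cons z t' =>
      have e1 : (y :: z :: t') ++ x :: b = y :: (z :: (t' ++ x :: b)) := by simp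
      have e2 : (y :: z :: t') ++ [x] = y :: (z :: (t' ++ [x])) := by simp
      have e3 : z :: (t' ++ x :: b) = (z :: t') ++ x :: b := by simp
      have e4 : z :: (t' ++ [x]) = (z :: t') ++ [x] := by simp
      rw [e1, e2, walkLen_cons₂, walkLen_cons₂, e3, e4, ih]
      ring

lemma isWalk_concat {V : Type*} (E : V → V → Prop) (a b : List V) (u x v : V)
    (h1 : IsWalk E (a ++ [x]) u x) (h2 : IsWalk E (x :: b) x v) :
    IsWalk E (a ++ x :: b) u v := by
  obtain ⟨_, h1h, h1l, h1c⟩ := h1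
  obtain ⟨_, h2h, h2l, h2c⟩ := h2
  refine ⟨by simp, ?_, ?_, ?_⟩
  · cases a <;> simp_all
  · rw [List.getLast?_append]
    cases b with
    | nil => simpa using h2l
    | cons c t => simp only [List.getLast?_cons_cons] at h2l ⊢; rw [h2l]; rfl
  · have : a ++ x :: b = (a ++ [x]) ++ b := by simp
    rw [this]; change List.IsChain E _; rw [List.isChain_append]
    refine ⟨h1c, (List.isChain_cons.1 h2c).2, ?_⟩
    intro p hp q hq
    rw [List.getLast?_append] at hp
    simp at hp
    subst hp
    exact (List.isChain_cons.1 h2c).1 q hq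

lemma isWalk_split {V : Type*} (E : V → V → Prop) (a b : List V) (u x v : V)
    (h : IsWalk E (a ++ x :: b) u v) :
    IsWalk E (a ++ [x]) u x ∧ IsWalk E (x :: b) x v := by
  obtain ⟨_, hh, hl, hc⟩ := h
  have hc' : List.Chain' E ((a ++ [x]) ++ b) := by simpa using hc
  change List.IsChain E _ at hc'; rw [List.isChain_append] at hc'
  obtain ⟨hca, hcb, hlink⟩ := hc'
  constructor
  · refine ⟨by simp, ?_, ?_, hca⟩
    · cases a <;> simp_all
    · rw [List.getLast?_append]; rfl
  · refine ⟨by simp, rfl, ?_, ?_⟩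
    · rw [List.getLast?_append] at hl
      cases b with
      | nil => simpa using hl
      | cons c t => simp only [List.getLast?_cons_cons] at hl ⊢
                    simpa using hl
    · change List.IsChain E _; rw [List.isChain_cons]
      refine ⟨?_, hcb⟩
      intro q hq
      refine hlink x ?_ q hq
      rw [List.getLast?_append]; rfl

lemma isWalk_to_form {V : Type*} (E : V → V → Prop) (l : List V) (u x : V)
    (h : IsWalk E l u x) : ∃ a, l = a ++ [x] := by
  obtain ⟨hne, _, hl, _⟩ := h
  refine ⟨l.dropLast, ?_⟩
  have := List.dropLast_append_getLast hne
  rw [List.getLast?_eq_getLast hne] at hl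
  simp at hl
  rw [hl] at this
  exact this.symm

lemma isWalk_from_form {V : Type*} (E : V → V → Prop) (l : List V) (x v : V)
    (h : IsWalk E l x v) : ∃ b, l = x :: b := by
  obtain ⟨hne, hh, _, _⟩ := h
  cases l with
  | nil => simp at hne
  | cons c t => simp at hh; subst hh; exact ⟨t, rfl⟩

/-- The set `B` of maximal pairs can be partitioned into `t ≤ 1/ε + 1`
classes so that for any two distinct pairs `(b₁,p₁f)` and `(b₂,p₂f)` in the same class
with `b₂ <_{P₂} b₁`, some walk from `b₁` to `p₂f` has length at most `(1+ε)β`. -/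
theorem stmt_8 {V : Type*} [Fintype V] [DecidableEq V] (E : V → V → Prop)
    (w : V → V → ℝ) (hw : ∀ x y, 0 ≤ w x y)
    (p₂ p₁ : List V) (hp₂nd : p₂.Nodup) (hp₂ch : p₂.Chain' E)
    (hp₂len : walkLen w p₂ = 0) (hp₁nd : p₁.Nodup)
    (hdisj : ∀ x ∈ p₁, x ∉ p₂)
    (hnoout : ∀ x ∈ p₁, ∀ y, ¬ E x y)
    (hhead : ∀ x y, E x y → y ∈ p₂ → ∃ i, p₂[i]? = some x ∧ p₂[i+1]? = some y)
    (hcross : ∀ (lw lw' : List V) (b q b' q' : V),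
      b ∈ p₂ → q ∈ p₁ → b' ∈ p₂ → q' ∈ p₁ →
      IsWalk E lw b q → IsWalk E lw' b' q' →
      p₂.idxOf b' < p₂.idxOf b → p₁.idxOf q' < p₁.idxOf q →
      ∃ x, x ∈ lw ∧ x ∈ lw')
    (β ε : ℝ) (hβ : 0 < β) (hε : 0 < ε) :
    ∃ (t : ℕ) (cl : V × V → Fin t), (t : ℝ) ≤ 1 / ε + 1 ∧
      ∀ b₁ q₁ b₂ q₂, MaximalPair E w p₂ p₁ β b₁ q₁ → MaximalPair E w p₂ p₁ β b₂ q₂ →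
        cl (b₁, q₁) = cl (b₂, q₂) → p₂.idxOf b₂ < p₂.idxOf b₁ →
        ∃ l, IsWalk E l b₁ q₂ ∧ walkLen w l ≤ (1 + ε) * β := by
  classical
  have hεβ : 0 < ε * β := mul_pos hε hβ
  set S : V → Set ℝ :=
    fun v => {r | ∃ l q, q ∈ p₁ ∧ IsWalk E l v q ∧ walkLen w l = r ∧ r ≤ β} with hSdef
  set d : V → ℝ := fun v => sInf (S v) with hddef
  have hbdd : ∀ v, BddBelow (S v) := by
    intro v
    refine ⟨0, fun r hr => ?_⟩
    obtain ⟨l, q, _, _, hlen, _⟩ := hr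
    rw [← hlen]; exact walkLen_nonneg w hw l
  have hd0 : ∀ v, (S v).Nonempty → 0 ≤ d v := by
    intro v hne
    apply le_csInf hne
    intro r hr
    obtain ⟨l, q, _, _, hlen, _⟩ := hr
    rw [← hlen]; exact walkLen_nonneg w hw l
  have hdβ : ∀ v, (S v).Nonempty → d v ≤ β := by
    intro v hne
    obtain ⟨r, hr⟩ := hne
    have hrβ : r ≤ β := by obtain ⟨_, _, _, _, _, h⟩ := hr; exact h
    exact le_trans (csInf_le (hbdd v) hr) hrβ
  refine ⟨⌊1/ε⌋₊ + 1,
    fun p => ⟨min ⌊d p.1 / (ε * β)⌋₊ ⌊1/ε⌋₊, Nat.lt_succ_of_le (min_le_right _ _)⟩, ?_, ?_⟩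
  · push_cast
    have : (⌊1/ε⌋₊ : ℝ) ≤ 1/ε := Nat.floor_le (by positivity)
    linarith
  · intro b₁ q₁ b₂ q₂ hM1 hM2 hcl hlt
    obtain ⟨hb₁p₂, hD1, hmax1⟩ := hM1
    obtain ⟨hb₂p₂, hD2, hmax2⟩ := hM2
    obtain ⟨hq₁p₁, ⟨l₁w, hl₁w, hl₁len⟩, hmin1⟩ := id hD1
    obtain ⟨hq₂p₁, ⟨l₂w, hl₂w, hl₂len⟩, hmin2⟩ := id hD2
    -- q₂ strictly before q₁ on p₁, by maximality of (b₂, q₂)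
    have hq : p₁.idxOf q₂ < p₁.idxOf q₁ := by
      by_contra h
      push_neg at h
      exact hmax2 ⟨b₁, q₁, hb₁p₂, hlt, hD1, h⟩
    have hne1 : (S b₁).Nonempty := ⟨walkLen w l₁w, l₁w, q₁, hq₁p₁, hl₁w, rfl, hl₁len⟩
    have hne2 : (S b₂).Nonempty := ⟨walkLen w l₂w, l₂w, q₂, hq₂p₁, hl₂w, rfl, hl₂len⟩
    -- the floors are equal
    have hflle : ∀ v, (S v).Nonempty → ⌊d v / (ε * β)⌋₊ ≤ ⌊1/ε⌋₊ := by
      intro v hne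
      apply Nat.floor_le_floor
      rw [div_le_iff₀ hεβ]
      calc d v ≤ β := hdβ v hne
        _ = 1/ε * (ε * β) := by field_simp
    have hfl : ⌊d b₁ / (ε * β)⌋₊ = ⌊d b₂ / (ε * β)⌋₊ := by
      have h1 := hflle b₁ hne1
      have h2 := hflle b₂ hne2
      have h3 : ⌊d b₁ / (ε * β)⌋₊ ⊓ ⌊1/ε⌋₊ = ⌊d b₂ / (ε * β)⌋₊ ⊓ ⌊1/ε⌋₊ :=
        congrArg Fin.val hcl
      rwa [min_eq_left h1, min_eq_left h2] at h3
    -- the gap bound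
    have hgap : d b₁ < d b₂ + ε * β := by
      have h1 : d b₁ / (ε * β) < ⌊d b₁ / (ε * β)⌋₊ + 1 := Nat.lt_floor_add_one _
      have h2 : (⌊d b₂ / (ε * β)⌋₊ : ℝ) ≤ d b₂ / (ε * β) :=
        Nat.floor_le (div_nonneg (hd0 b₂ hne2) (le_of_lt hεβ))
      rw [hfl] at h1
      have h3 : d b₁ / (ε * β) < d b₂ / (ε * β) + 1 := by linarith
      rw [div_lt_iff₀ hεβ] at h3
      calc d b₁ < (d b₂ / (ε * β) + 1) * (ε * β) := h3
        _ = d b₂ + ε * β := by field_simp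
    -- near-optimal walk from b₁
    obtain ⟨r, hrS, hrlt⟩ := exists_lt_of_csInf_lt hne1 hgap
    obtain ⟨lW, qs, hqs, hWwalk, hWlen, hWβ⟩ := hrS
    have h5 : p₁.idxOf q₁ ≤ p₁.idxOf qs :=
      hmin1 qs hqs ⟨lW, hWwalk, by rw [hWlen]; exact hWβ⟩
    have h6 : p₁.idxOf q₂ < p₁.idxOf qs := lt_of_lt_of_le hq h5
    obtain ⟨x, hx1, hx2⟩ :=
      hcross lW l₂w b₁ qs b₂ q₂ hb₁p₂ hqs hb₂p₂ hq₂p₁ hWwalk hl₂w hlt h6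
    obtain ⟨a, b, rfl⟩ := List.append_of_mem hx1
    obtain ⟨a', b', rfl⟩ := List.append_of_mem hx2
    obtain ⟨hW1a, hW1b⟩ := isWalk_split E a b b₁ x qs hWwalk
    obtain ⟨hW2a, hW2b⟩ := isWalk_split E a' b' b₂ x q₂ hl₂w
    have hC := isWalk_concat E a b' b₁ x q₂ hW1a hW2b
    refine ⟨a ++ x :: b', hC, ?_⟩
    have hs1 : walkLen w (a ++ x :: b) = walkLen w (a ++ [x]) + walkLen w (x :: b) :=
      walkLen_split w a x b
    have hs2 : walkLen w (a' ++ x :: b') = walkLen w (a' ++ [x]) + walkLen w (x :: b') :=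
      walkLen_split w a' x b'
    rw [walkLen_split]
    rw [hs1] at hWlen
    rw [hs2] at hl₂len
    by_cases hm : walkLen w (a' ++ [x]) + walkLen w (x :: b) ≤ β
    · have hD : IsWalk E (a' ++ x :: b) b₂ qs := isWalk_concat E a' b b₂ x qs hW2a hW1b
      have hmem : walkLen w (a' ++ x :: b) ∈ S b₂ :=
        ⟨a' ++ x :: b, qs, hqs, hD, rfl, by rw [walkLen_split]; exact hm⟩
      have h7 : d b₂ ≤ walkLen w (a' ++ x :: b) := csInf_le (hbdd b₂) hmem
      rw [walkLen_split] at h7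
      linarith
    · push_neg at hm
      linarith
end

section
/- Let G be a finite directed graph with nonnegative edge weights containing a directed path P = p₀, …, p_{n-1} of total length 0, let m be an index, and let β ≥ 0. Let D be a set of pairs (a,b) of indices with b < m < a such that for each (a,b) ∈ D there is a walk in G from p_a to p_b of length at most β avoiding all vertices p_k with k < b. Let H be the directed graph on {0, …, n-1} with edges k → k+1 for all k < n-1 and an edge a → b for every (a,b) ∈ D. If v < u are indices and there is a walk in H from u to v all of whose vertices are at least v, then there is a walk in G from p_u to p_v of length at most 2β avoiding all vertices p_k with k < v. -/
lemma walkLen_single {V : Type*} (w : V → V → ℝ) (a : V) : walkLen w [a] = 0 := by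
  simp [walkLen]

lemma walkLen_cons_cons {V : Type*} (w : V → V → ℝ) (a b : V) (l : List V) :
    walkLen w (a :: b :: l) = w a b + walkLen w (b :: l) := by
  simp [walkLen]

lemma isWalk_single {V : Type*} (E : V → V → Prop) (u : V) : IsWalk E [u] u u := by
  refine ⟨by simp, by simp, by simp, List.isChain_singleton _⟩

lemma isWalk_pair {V : Type*} {E : V → V → Prop} {u v : V} (h : E u v) :
    IsWalk E [u, v] u v := by
  refine ⟨by simp, by simp, by simp, List.isChain_pair.mpr h⟩

lemma walk_trans {V : Type*} {E : V → V → Prop} (w : V → V → ℝ) :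
    ∀ (l₁ : List V) {l₂ : List V} {u x v : V}, IsWalk E l₁ u x → IsWalk E l₂ x v →
    ∃ l, IsWalk E l u v ∧ walkLen w l = walkLen w l₁ + walkLen w l₂ ∧
      ∀ y ∈ l, y ∈ l₁ ∨ y ∈ l₂ := by
  intro l₁
  induction l₁ with
  | nil => intro l₂ u x v h; exact absurd rfl h.1
  | cons a t ih =>
    intro l₂ u x v h h2
    obtain ⟨-, hhead, hlast, hchain⟩ := h
    have hau : a = u := by simpa using hhead
    subst hau
    cases t with
    | nil =>
      have hax : a = x := by simpa using hlast
      subst hax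
      exact ⟨l₂, h2, by simp [walkLen_single], fun y hy => Or.inr hy⟩
    | cons b t' =>
      have hwalk : IsWalk E (b :: t') b x :=
        ⟨by simp, by simp, by simpa using hlast, hchain.tail⟩
      obtain ⟨l, hl, hlen, hmem⟩ := ih hwalk h2
      have hEab : E a b := (List.isChain_cons_cons.mp hchain).1
      cases l with
      | nil => exact absurd rfl hl.1
      | cons c l' =>
        have hcb : c = b := by simpa using hl.2.1
        subst hcb
        refine ⟨a :: c :: l', ⟨by simp, by simp, by simpa using hl.2.2.1,
          List.isChain_cons_cons.mpr ⟨hEab, hl.2.2.2⟩⟩, ?_, ?_⟩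
        · rw [walkLen_cons_cons, walkLen_cons_cons, hlen]; ring
        · intro y hy
          rcases List.mem_cons.mp hy with h | h
          · exact Or.inl (by simp [h])
          · rcases hmem y h with h' | h'
            · exact Or.inl (by simp [List.mem_cons.mp h'])
            · exact Or.inr h'

lemma last_edge {V : Type*} {R : V → V → Prop} :
    ∀ (l : List V) {u v : V}, IsWalk R l u v → u ≠ v → ∃ a ∈ l, R a v := by
  intro l
  induction l with
  | nil => intro u v h; exact absurd rfl h.1
  | cons a t ih =>
    intro u v h hne
    obtain ⟨-, hhead, hlast, hchain⟩ := h
    have hau : a = u := by simpa using hhead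
    subst hau
    cases t with
    | nil => exact absurd (by simpa using hlast) hne
    | cons b t' =>
      have hRab : R a b := (List.isChain_cons_cons.mp hchain).1
      by_cases hbv : b = v
      · exact ⟨a, by simp, hbv ▸ hRab⟩
      · obtain ⟨c, hc, hRcv⟩ := ih ⟨by simp, by simp, by simpa using hlast, hchain.tail⟩ hbv
        exact ⟨c, by simp [hc], hRcv⟩

lemma forward_walk {V : Type*} {E : V → V → Prop} {w : V → V → ℝ} {n : ℕ} {p : ℕ → V}
    (hch : ∀ i, i + 1 < n → E (p i) (p (i + 1)))
    (hlen0 : ∀ i, i + 1 < n → w (p i) (p (i + 1)) = 0) (i j : ℕ) (hij : i ≤ j)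
    (hjn : j < n) :
    ∃ l, IsWalk E l (p i) (p j) ∧ walkLen w l = 0 ∧
      ∀ x ∈ l, ∃ k, i ≤ k ∧ k ≤ j ∧ x = p k := by
  induction j, hij using Nat.le_induction with
  | base =>
    exact ⟨[p i], isWalk_single E (p i), walkLen_single w (p i),
      fun x hx => ⟨i, le_refl i, le_refl i, by simpa using hx⟩⟩
  | succ j hij ih =>
    obtain ⟨l, hl, hlen, hmem⟩ := ih (by omega)
    obtain ⟨l', hl', hlen', hmem'⟩ :=
      walk_trans w l hl (isWalk_pair (hch j hjn))
    refine ⟨l', hl', ?_, ?_⟩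
    · rw [hlen', hlen, walkLen_cons_cons, walkLen_single, hlen0 j hjn]; ring
    · intro x hx
      rcases hmem' x hx with h | h
      · obtain ⟨k, h1, h2, h3⟩ := hmem x h
        exact ⟨k, h1, by omega, h3⟩
      · rcases List.mem_pair.mp h with h | h
        · exact ⟨j, by omega, by omega, h⟩
        · exact ⟨j + 1, by omega, le_refl _, h⟩

lemma first_detour {n : ℕ} {D : Set (ℕ × ℕ)} :
    ∀ (l : List ℕ) {u v : ℕ},
    IsWalk (fun a c => (a + 1 < n ∧ c = a + 1) ∨ (a, c) ∈ D) l u v → v < u →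
    ∃ a b, (a, b) ∈ D ∧ u ≤ a ∧ a ∈ l ∧ b ∈ l := by
  intro l
  induction l with
  | nil => intro u v h; exact absurd rfl h.1
  | cons a t ih =>
    intro u v h hvu
    obtain ⟨-, hhead, hlast, hchain⟩ := h
    have hau : a = u := by simpa using hhead
    subst hau
    cases t with
    | nil =>
      have : a = v := by simpa using hlast
      omega
    | cons b t' =>
      rcases (List.isChain_cons_cons.mp hchain).1 with ⟨hlt, hb⟩ | hDab
      · subst hb
        obtain ⟨a', b', hd, hle, ha', hb'⟩ :=
          ih (u := a + 1) (v := v) ⟨by simp, by simp, by simpa using hlast, hchain.tail⟩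
            (by omega)
        exact ⟨a', b', hd, by omega, by simp [ha'], by simp [hb']⟩
      · exact ⟨a, b, hDab, le_refl _, by simp, by simp⟩

/-- With `P` a zero-length path, detour pairs `D` realized in `G` by walks
of length at most `β` avoiding the prefix before their endpoint, and `H` the index graph
with successor and detour edges: if `v < u` and `H` has a walk from `u` to `v` staying at
indices `≥ v`, then `G` has a walk from `p u` to `p v` of length at most `2β` avoiding
all vertices `p k` with `k < v`. -/
theorem stmt_11 {V : Type*} [Fintype V] (E : V → V → Prop) (w : V → V → ℝ)
    (hw : ∀ x y, 0 ≤ w x y) (n : ℕ) (hn : 0 < n) (p : ℕ → V)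
    (hinj : ∀ i j, i < n → j < n → p i = p j → i = j)
    (hch : ∀ i, i + 1 < n → E (p i) (p (i + 1)))
    (hlen0 : ∀ i, i + 1 < n → w (p i) (p (i + 1)) = 0)
    (m : ℕ) (hm : m < n) (β : ℝ) (hβ : 0 ≤ β)
    (D : Set (ℕ × ℕ)) (hD : ∀ q ∈ D, q.2 < m ∧ m < q.1 ∧ q.1 < n)
    (hDwalk : ∀ q ∈ D, ∃ l, IsWalk E l (p q.1) (p q.2) ∧ walkLen w l ≤ β ∧
      ∀ x ∈ l, ∀ k, k < q.2 → x ≠ p k) :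
    let H : ℕ → ℕ → Prop := fun a c => (a + 1 < n ∧ c = a + 1) ∨ (a, c) ∈ D
    ∀ u v : ℕ, v < u → u < n →
      (∃ l, IsWalk H l u v ∧ ∀ x ∈ l, v ≤ x) →
      ∃ l, IsWalk E l (p u) (p v) ∧ walkLen w l ≤ 2 * β ∧
        ∀ x ∈ l, ∀ k, k < v → x ≠ p k := by
  intro H u v hvu hun hex
  obtain ⟨l, hlwalk, hlmem⟩ := hex
  -- helper for avoidance on path segments
  have key : ∀ k₀, v ≤ k₀ → k₀ < n → ∀ k, k < v → p k₀ ≠ p k := by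
    intro k₀ h1 h2 k hk heq
    have := hinj k₀ k h2 (by omega) heq
    omega
  -- last edge must be a detour (a₁, v) ∈ D
  obtain ⟨a₁, ha₁l, hHa₁v⟩ := last_edge l hlwalk (by omega)
  have hva₁ : v ≤ a₁ := hlmem a₁ ha₁l
  have hDa₁ : (a₁, v) ∈ D := by
    rcases hHa₁v with ⟨h1, h2⟩ | h
    · omega
    · exact h
  obtain ⟨hvm, hma₁, ha₁n⟩ := hD _ hDa₁
  obtain ⟨l₁, hl₁, hlen₁, havoid₁⟩ := hDwalk _ hDa₁
  by_cases hua₁ : u ≤ a₁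
  · -- one detour suffices
    obtain ⟨lf, hlf, hlenf, hmemf⟩ := forward_walk hch hlen0 u a₁ hua₁ ha₁n
    obtain ⟨l', hl', hlen', hmem'⟩ := walk_trans w lf hlf hl₁
    refine ⟨l', hl', by rw [hlen', hlenf]; linarith, ?_⟩
    intro x hx k hk
    rcases hmem' x hx with h | h
    · obtain ⟨k₀, h1, h2, h3⟩ := hmemf x h
      exact h3 ▸ key k₀ (by omega) (by omega) k hk
    · exact havoid₁ x h k hk
  · -- need two detours
    obtain ⟨a₂, b₂, hD2, hua₂, ha₂l, hb₂l⟩ := first_detour l hlwalk hvu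
    obtain ⟨hb₂m, hma₂, ha₂n⟩ := hD _ hD2
    have hvb₂ : v ≤ b₂ := hlmem b₂ hb₂l
    obtain ⟨l₂, hl₂, hlen₂, havoid₂⟩ := hDwalk _ hD2
    obtain ⟨f1, hf1, hlenf1, hmemf1⟩ := forward_walk hch hlen0 u a₂ hua₂ ha₂n
    obtain ⟨f2, hf2, hlenf2, hmemf2⟩ := forward_walk hch hlen0 b₂ a₁ (by omega) ha₁n
    obtain ⟨g1, hg1, hleng1, hmemg1⟩ := walk_trans w f1 hf1 hl₂
    obtain ⟨g2, hg2, hleng2, hmemg2⟩ := walk_trans w g1 hg1 hf2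
    obtain ⟨g3, hg3, hleng3, hmemg3⟩ := walk_trans w g2 hg2 hl₁
    refine ⟨g3, hg3, by rw [hleng3, hleng2, hleng1, hlenf1, hlenf2]; linarith, ?_⟩
    intro x hx k hk
    rcases hmemg3 x hx with h | h
    · rcases hmemg2 x h with h' | h'
      · rcases hmemg1 x h' with h'' | h''
        · obtain ⟨k₀, h1, h2, h3⟩ := hmemf1 x h''
          exact h3 ▸ key k₀ (by omega) (by omega) k hk
        · exact havoid₂ x h'' k (by omega)
      · obtain ⟨k₀, h1, h2, h3⟩ := hmemf2 x h'
        exact h3 ▸ key k₀ (by omega) (by omega) k hk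
    · exact havoid₁ x h k hk
end
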